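/- For any random variable $Q$ taking values in $[0,1]$ whose complementary CDF satisfies $\Pr[Q \ge \lambda] \le [1-(1-(1-\lambda)^{N_r-1})^{K-N_r}]^N$ for all $\lambda \in [0,1]$ (with integers $K > N_r \ge 2$ and $N \ge 1$), the expectation satisfies $\mathbb{E}[Q] < N^{-1/(K-N_r)}$. -/

import Mathlib

open MeasureTheory

/-- For any random variable `Q` with values in `[0,1]` whose complementary CDF
satisfies `Pr[Q ≥ λ] ≤ [1-(1-(1-λ)^{N_r-1})^{K-N_r}]^N` for all `λ ∈ [0,1]` (with integers
`K > N_r ≥ 2`, `N ≥ 1`), we have `E[Q] < N^{-1/(K-N_r)}`. -/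
theorem stmt_3 {Ω : Type*} [MeasurableSpace Ω] (μ : Measure Ω) [IsProbabilityMeasure μ]
    (Nr K N : ℕ) (hNr : 2 ≤ Nr) (hK : Nr < K) (hN : 1 ≤ N)
    (Q : Ω → ℝ) (hmeas : Measurable Q)
    (hrange : ∀ ω, Q ω ∈ Set.Icc (0 : ℝ) 1)
    (hccdf : ∀ lam ∈ Set.Icc (0 : ℝ) 1,
      μ {ω | lam ≤ Q ω}
        ≤ ENNReal.ofReal ((1 - (1 - (1 - lam) ^ (Nr - 1)) ^ (K - Nr)) ^ N)) :
    ∫ ω, Q ω ∂μ < (N : ℝ) ^ (-(1 : ℝ) / (K - Nr)) := by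
  set q : ℕ := K - Nr with hqdef
  have hq1 : 1 ≤ q := Nat.le_sub_of_add_le (by omega)
  have hqR : (1 : ℝ) ≤ (q : ℝ) := by exact_mod_cast hq1
  have hqpos : (0 : ℝ) < (q : ℝ) := lt_of_lt_of_le one_pos hqR
  have hNpos : (0 : ℝ) < (N : ℝ) := by exact_mod_cast hN
  set g : ℝ → ℝ := fun t => Real.exp (-(N : ℝ) * t ^ (q : ℝ)) with hgdef
  -- integrability of g on Ioi 0
  have hgint : IntegrableOn g (Set.Ioi 0) := by
    have := integrableOn_rpow_mul_exp_neg_mul_rpow (p := (q : ℝ)) (s := 0) (b := (N : ℝ))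
      (by norm_num) hqpos hNpos
    refine this.congr_fun (fun x hx => ?_) measurableSet_Ioi
    simp [hgdef, Real.rpow_zero]
  have hgint1 : IntegrableOn g (Set.Ioc 0 1) :=
    hgint.mono_set Set.Ioc_subset_Ioi_self
  -- integrability of Q
  have hQint : Integrable Q μ := by
    refine (integrable_const (1 : ℝ)).mono' hmeas.aestronglyMeasurable ?_
    refine ae_of_all _ fun ω => ?_
    rw [Real.norm_eq_abs, abs_of_nonneg (hrange ω).1]
    exact (hrange ω).2
  -- layer cake
  have hlayer : ∫ ω, Q ω ∂μ
      = ∫ t in Set.Ioc (0:ℝ) 1, ENNReal.toReal (μ {a | t ≤ Q a}) :=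
    hQint.integral_eq_integral_Ioc_meas_le (ae_of_all _ fun ω => (hrange ω).1)
      (ae_of_all _ fun ω => (hrange ω).2)
  -- pointwise bound on (0,1]
  have hpt : ∀ t ∈ Set.Ioc (0:ℝ) 1, ENNReal.toReal (μ {a | t ≤ Q a}) ≤ g t := by
    intro t ht
    obtain ⟨ht0, ht1⟩ := ht
    have ht0' : (0:ℝ) ≤ t := ht0.le
    have h1t0 : (0:ℝ) ≤ 1 - t := by linarith
    have h1t1 : (1:ℝ) - t ≤ 1 := by linarith
    -- step 1: measure bound
    have h1 : ENNReal.toReal (μ {a | t ≤ Q a})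
        ≤ (1 - (1 - (1 - t) ^ (Nr - 1)) ^ q) ^ N := by
      refine ENNReal.toReal_le_of_le_ofReal ?_ (hccdf t ⟨ht0', ht1⟩)
      have hb0 : (0:ℝ) ≤ 1 - (1 - t) ^ (Nr - 1) := by
        have := pow_le_one₀ h1t0 h1t1 (n := Nr - 1)
        linarith
      have hb1 : (1 - (1 - t) ^ (Nr - 1)) ^ q ≤ 1 := by
        refine pow_le_one₀ hb0 ?_
        nlinarith [pow_nonneg h1t0 (Nr - 1)]
      exact pow_nonneg (by linarith) N
    -- step 2: (1-t)^{Nr-1} ≤ 1-t  hence  t^q ≤ (1-(1-t)^{Nr-1})^q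
    have h2 : (1 - (1 - t) ^ (Nr - 1)) ^ q ≥ t ^ q := by
      refine pow_le_pow_left₀ ht0' ?_ q
      have : (1 - t) ^ (Nr - 1) ≤ 1 - t :=
        pow_le_of_le_one h1t0 h1t1 (by omega)
      linarith
    have htq1 : t ^ q ≤ 1 := pow_le_one₀ ht0' ht1
    have h3 : (1 - (1 - (1 - t) ^ (Nr - 1)) ^ q) ^ N ≤ (1 - t ^ q) ^ N := by
      refine pow_le_pow_left₀ ?_ (by linarith) N
      nlinarith [pow_le_one₀ h1t0 h1t1 (n := Nr - 1),
        pow_le_one₀ (by nlinarith [pow_le_one₀ h1t0 h1t1 (n := Nr - 1)] :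
          (0:ℝ) ≤ 1 - (1 - t) ^ (Nr - 1)) (by nlinarith [pow_nonneg h1t0 (Nr - 1)] :
          (1:ℝ) - (1 - t) ^ (Nr - 1) ≤ 1) (n := q)]
    have h4 : (1 - t ^ q) ^ N ≤ g t := by
      have hexp : 1 - t ^ q ≤ Real.exp (-(t ^ q)) := by
        have := Real.add_one_le_exp (-(t ^ q)); linarith
      calc (1 - t ^ q) ^ N ≤ (Real.exp (-(t ^ q))) ^ N :=
            pow_le_pow_left₀ (by linarith) hexp N
        _ = Real.exp ((N : ℝ) * (-(t ^ q))) := by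
            rw [← Real.exp_nat_mul]
        _ = g t := by
            rw [hgdef]
            congr 1
            rw [Real.rpow_natCast]
            ring
    linarith
  -- integral comparison on (0,1]
  have hle : ∫ t in Set.Ioc (0:ℝ) 1, ENNReal.toReal (μ {a | t ≤ Q a})
      ≤ ∫ t in Set.Ioc (0:ℝ) 1, g t := by
    refine integral_mono_of_nonneg ?_ hgint1 ?_
    · exact ae_of_all _ fun t => ENNReal.toReal_nonneg
    · refine (ae_restrict_iff' measurableSet_Ioc).2 (ae_of_all _ hpt)
  -- strict inequality: tail of g on (1,∞) is positive
  have hsplit : ∫ t in Set.Ioi (0:ℝ), g t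
      = (∫ t in Set.Ioc (0:ℝ) 1, g t) + ∫ t in Set.Ioi (1:ℝ), g t := by
    rw [← setIntegral_union (Set.Ioc_disjoint_Ioi le_rfl) measurableSet_Ioi hgint1
      (hgint.mono_set (Set.Ioi_subset_Ioi zero_le_one)), Set.Ioc_union_Ioi_eq_Ioi zero_le_one]
  have htailpos : 0 < ∫ t in Set.Ioi (1:ℝ), g t := by
    have hint' : IntegrableOn g (Set.Ioi 1) := hgint.mono_set (Set.Ioi_subset_Ioi zero_le_one)
    rw [setIntegral_pos_iff_support_of_nonneg_ae
      (ae_of_all _ fun t => (Real.exp_pos _).le) hint']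
    have : Function.support g ∩ Set.Ioi 1 = Set.Ioi 1 := by
      ext x
      simp [hgdef, Function.support, Real.exp_ne_zero]
    rw [this]
    simp [Real.volume_Ioi]
  have hlt : ∫ t in Set.Ioc (0:ℝ) 1, g t < ∫ t in Set.Ioi (0:ℝ), g t := by
    rw [hsplit]; linarith
  -- value of the full integral
  have hval : ∫ t in Set.Ioi (0:ℝ), g t
      = (N : ℝ) ^ (-1 / (q : ℝ)) * Real.Gamma (1 / (q : ℝ) + 1) := by
    simpa [hgdef] using integral_exp_neg_mul_rpow hqpos hNpos
  -- Gamma bound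
  have hGamma : Real.Gamma (1 / (q : ℝ) + 1) ≤ 1 := by
    have h1 : (1:ℝ) ∈ Set.Ioi (0:ℝ) := by norm_num
    have h2 : (2:ℝ) ∈ Set.Ioi (0:ℝ) := by norm_num
    have ha : (0:ℝ) ≤ 1 - 1 / (q : ℝ) := by
      have : 1 / (q : ℝ) ≤ 1 := by
        rw [div_le_one hqpos]; exact hqR
      linarith
    have hb : (0:ℝ) ≤ 1 / (q : ℝ) := by positivity
    have := Real.convexOn_Gamma.2 h1 h2 ha hb (by ring)
    rw [Real.Gamma_one, Real.Gamma_two] at this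
    have harg : (1 - 1 / (q:ℝ)) • (1:ℝ) + (1 / (q:ℝ)) • (2:ℝ) = 1 / (q:ℝ) + 1 := by
      simp [smul_eq_mul]; ring
    rw [harg] at this
    calc Real.Gamma (1 / (q : ℝ) + 1) ≤ (1 - 1/(q:ℝ)) * 1 + (1/(q:ℝ)) * 1 := this
      _ = 1 := by ring
  have hcast : ((K : ℝ) - (Nr : ℝ)) = (q : ℝ) := by
    rw [hqdef]; push_cast [Nat.cast_sub hK.le]; ring
  have hpow : (N : ℝ) ^ (-1 / (q : ℝ)) * Real.Gamma (1 / (q : ℝ) + 1)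
      ≤ (N : ℝ) ^ (-(1:ℝ) / ((K:ℝ) - (Nr:ℝ))) := by
    rw [hcast]
    calc (N : ℝ) ^ (-1 / (q : ℝ)) * Real.Gamma (1 / (q : ℝ) + 1)
        ≤ (N : ℝ) ^ (-1 / (q : ℝ)) * 1 := by
          exact mul_le_mul_of_nonneg_left hGamma (Real.rpow_nonneg hNpos.le _)
      _ = (N : ℝ) ^ (-(1:ℝ) / (q : ℝ)) := by norm_num
  calc ∫ ω, Q ω ∂μ = ∫ t in Set.Ioc (0:ℝ) 1, ENNReal.toReal (μ {a | t ≤ Q a}) := hlayer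
    _ ≤ ∫ t in Set.Ioc (0:ℝ) 1, g t := hle
    _ < ∫ t in Set.Ioi (0:ℝ), g t := hlt
    _ = (N : ℝ) ^ (-1 / (q : ℝ)) * Real.Gamma (1 / (q : ℝ) + 1) := hval
    _ ≤ (N : ℝ) ^ (-(1:ℝ) / ((K:ℝ) - (Nr:ℝ))) := hpow
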